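/- With s^{(j)} and s̄^{(j)} as in the ULA setting (r₀ = (0,y₀,z₀), z₀ > 0, p_m = (0,mΔ,0)), the quantity γ₁ = (3 s^{(2)} s^{(4)} - (s̄^{(3)})² - z₀² (s^{(4)})²) / (s^{(2)})² is strictly positive. -/

import Mathlib

/-- Positivity of the curvature coefficient `γ₁` in the ULA setting. -/
theorem gamma1_pos (M : ℕ) (Δ y₀ z₀ : ℝ) (hΔ : 0 < Δ) (hz : 0 < z₀)
    (r₀ : EuclideanSpace ℝ (Fin 3))
    (hr₀ : r₀ = (WithLp.equiv 2 (Fin 3 → ℝ)).symm ![0, y₀, z₀])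
    (p : ℤ → EuclideanSpace ℝ (Fin 3))
    (hp : ∀ m : ℤ, p m = (WithLp.equiv 2 (Fin 3 → ℝ)).symm ![0, (m : ℝ) * Δ, 0])
    (s sb : ℕ → ℝ)
    (hs : ∀ j : ℕ, s j =
      (1 / (2 * (M : ℝ) + 1)) * ∑ m ∈ Finset.Icc (-(M : ℤ)) (M : ℤ), ‖r₀ - p m‖ ^ (-(j : ℤ)))
    (hsb : ∀ j : ℕ, sb j =
      (1 / (2 * (M : ℝ) + 1)) * ∑ m ∈ Finset.Icc (-(M : ℤ)) (M : ℤ),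
        ((m : ℝ) * Δ - y₀) * ‖r₀ - p m‖ ^ (-((j : ℤ) + 1)))
    (γ₁ : ℝ)
    (hγ₁ : γ₁ = (3 * s 2 * s 4 - (sb 3) ^ 2 - z₀ ^ 2 * (s 4) ^ 2) / (s 2) ^ 2) :
    0 < γ₁ := by
  set T := Finset.Icc (-(M : ℤ)) (M : ℤ) with hT
  set c : ℝ := 1 / (2 * (M : ℝ) + 1) with hc
  have hcpos : 0 < c := by positivity
  set d : ℤ → ℝ := fun m => ‖r₀ - p m‖ with hdm
  set u : ℤ → ℝ := fun m => (m : ℝ) * Δ - y₀ with hu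
  -- squared distance
  have hd2 : ∀ m : ℤ, d m ^ 2 = u m ^ 2 + z₀ ^ 2 := by
    intro m
    have h1 : d m ^ 2 = ∑ i : Fin 3, ((r₀ - p m) i) ^ 2 := by
      rw [hdm]
      simp only [EuclideanSpace.norm_eq]
      rw [Real.sq_sqrt (by positivity)]
      simp [Real.norm_eq_abs, sq_abs]
    rw [h1, Fin.sum_univ_three]
    simp only [PiLp.sub_apply, hr₀, hp, WithLp.equiv_symm_apply, PiLp.toLp_apply,
      Matrix.cons_val_zero, Matrix.cons_val_one, Matrix.head_cons,
      Matrix.cons_val_two, Matrix.tail_cons, hu]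
    ring
  have hdpos : ∀ m : ℤ, 0 < d m := by
    intro m
    have h2 : 0 < d m ^ 2 := by rw [hd2]; positivity
    have h0 : (0:ℝ) ≤ d m := norm_nonneg _
    nlinarith
  have hdne : ∀ m : ℤ, d m ≠ 0 := fun m => (hdpos m).ne'
  -- sums
  set A2 : ℝ := ∑ m ∈ T, ((d m)⁻¹) ^ 2 with hA2
  set A4 : ℝ := ∑ m ∈ T, ((d m)⁻¹) ^ 4 with hA4
  set A6 : ℝ := ∑ m ∈ T, ((d m)⁻¹) ^ 6 with hA6
  set B : ℝ := ∑ m ∈ T, u m * ((d m)⁻¹) ^ 4 with hB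
  have hpowlem : ∀ (m : ℤ) (n : ℕ), ‖r₀ - p m‖ ^ (-(n:ℤ)) = (d m)⁻¹ ^ n := by
    intro m n
    simp only [hdm, zpow_neg, zpow_natCast, inv_pow]
  have hs2 : s 2 = c * A2 := by
    rw [hs 2, hA2]
    congr 1
    exact Finset.sum_congr rfl fun m _ => hpowlem m 2
  have hs4 : s 4 = c * A4 := by
    rw [hs 4, hA4]
    congr 1
    exact Finset.sum_congr rfl fun m _ => hpowlem m 4
  have hsb3 : sb 3 = c * B := by
    rw [hsb 3, hB]
    congr 1
    refine Finset.sum_congr rfl fun m _ => ?_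
    rw [show (-(((3:ℕ):ℤ) + 1) : ℤ) = -((4:ℕ):ℤ) by norm_num, hpowlem m 4, hu]
  -- Cauchy-Schwarz 1 : B² ≤ A2 * (A4 - z₀² A6)
  have hT0 : (0 : ℤ) ∈ T := by
    simp [hT, Finset.mem_Icc]
  have hA2pos : 0 < A2 := by
    apply Finset.sum_pos
    · intro m _; exact pow_pos (inv_pos.2 (hdpos m)) _
    · exact ⟨0, hT0⟩
  have hA4pos : 0 < A4 := by
    apply Finset.sum_pos
    · intro m _; exact pow_pos (inv_pos.2 (hdpos m)) _
    · exact ⟨0, hT0⟩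
  have cs1 : B ^ 2 ≤ A2 * (A4 - z₀ ^ 2 * A6) := by
    have h := Finset.sum_mul_sq_le_sq_mul_sq T (fun m => (d m)⁻¹)
      (fun m => u m * ((d m)⁻¹) ^ 3)
    have e1 : ∑ m ∈ T, (d m)⁻¹ * (u m * ((d m)⁻¹) ^ 3) = B := by
      rw [hB]; exact Finset.sum_congr rfl fun m _ => by ring
    have e2 : ∑ m ∈ T, (u m * ((d m)⁻¹) ^ 3) ^ 2 = A4 - z₀ ^ 2 * A6 := by
      rw [hA4, hA6, Finset.mul_sum, ← Finset.sum_sub_distrib]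
      refine Finset.sum_congr rfl fun m _ => ?_
      have hu2 : u m ^ 2 = d m ^ 2 - z₀ ^ 2 := by rw [hd2]; ring
      have hd0 := hdne m
      rw [show (u m * (d m)⁻¹ ^ 3) ^ 2 = u m ^ 2 * ((d m)⁻¹) ^ 6 by ring, hu2]
      field_simp
    rw [e1, e2] at h
    exact h
  have cs2 : A4 ^ 2 ≤ A2 * A6 := by
    have h := Finset.sum_mul_sq_le_sq_mul_sq T (fun m => (d m)⁻¹)
      (fun m => ((d m)⁻¹) ^ 3)
    have e1 : ∑ m ∈ T, (d m)⁻¹ * ((d m)⁻¹) ^ 3 = A4 := by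
      rw [hA4]; exact Finset.sum_congr rfl fun m _ => by ring
    have e2 : ∑ m ∈ T, (((d m)⁻¹) ^ 3) ^ 2 = A6 := by
      rw [hA6]; exact Finset.sum_congr rfl fun m _ => by ring
    rw [e1, e2] at h
    exact h
  -- finish
  have hnum : 0 < 3 * s 2 * s 4 - (sb 3) ^ 2 - z₀ ^ 2 * (s 4) ^ 2 := by
    rw [hs2, hs4, hsb3]
    have key : 0 < 3 * A2 * A4 - B ^ 2 - z₀ ^ 2 * A4 ^ 2 := by
      have h1 : z₀ ^ 2 * A4 ^ 2 ≤ z₀ ^ 2 * (A2 * A6) :=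
        mul_le_mul_of_nonneg_left cs2 (by positivity)
      nlinarith [mul_pos hA2pos hA4pos]
    nlinarith [sq_nonneg c, mul_pos hcpos hcpos]
  have hden : 0 < (s 2) ^ 2 := by
    rw [hs2]; positivity
  rw [hγ₁]
  exact div_pos hnum hden
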